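/- arXiv:1804.00170 — 2 statements merged into one kernel-verified Lean document; each statement's English description precedes it below -/
import Mathlib

section
/- Let N ≥ 1 be an integer and δ be a real number with 0 < |δ| ≤ 1/(2N). Then (1/N²)·|∑_{x=0}^{N-1} e^{2πi x δ}|² ≥ 4/π². -/
open Complex Finset

lemma abs_exp_I_sub_one_sq (θ : ℝ) :
    ‖Complex.exp ((θ : ℂ) * I) - 1‖ ^ 2 = 4 * Real.sin (θ / 2) ^ 2 := by
  rw [Complex.sq_norm, Complex.exp_mul_I]
  simp [Complex.normSq_apply, Complex.cos_ofReal_re, Complex.sin_ofReal_re,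
    Complex.cos_ofReal_im, Complex.sin_ofReal_im]
  have h1 : Real.cos (θ / 2) ^ 2 = 1 / 2 + Real.cos θ / 2 := by
    have := Real.cos_sq (θ / 2)
    rw [show 2 * (θ / 2) = θ by ring] at this
    exact this
  have h2 := Real.sin_sq_add_cos_sq (θ / 2)
  have h3 := Real.sin_sq_add_cos_sq θ
  nlinarith [h1, h2, h3]

theorem stmt_1 (N : ℕ) (hN : 1 ≤ N) (δ : ℝ) (hδ : 0 < |δ|)
    (hδ' : |δ| ≤ 1 / (2 * N)) :
    4 / Real.pi ^ 2 ≤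
      (1 / (N : ℝ) ^ 2) *
        ‖∑ x ∈ Finset.range N,
          Complex.exp (2 * Real.pi * Complex.I * x * δ)‖ ^ 2 := by
  have hNpos : (0 : ℝ) < N := by exact_mod_cast hN
  have h1N : (1 : ℝ) ≤ N := by exact_mod_cast hN
  have hπ := Real.pi_pos
  set z : ℂ := Complex.exp ((2 * Real.pi * δ : ℝ) * I) with hz
  have hz1 : z ≠ 1 := by
    rw [hz, Ne, Complex.exp_eq_one_iff]
    push_neg
    intro n hn
    push_cast at hn
    have h2 : ((2 * Real.pi * δ : ℝ) : ℂ) = ((2 * Real.pi * (n : ℝ) : ℝ) : ℂ) := by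
      apply mul_right_cancel₀ Complex.I_ne_zero
      push_cast
      linear_combination hn
    have h3 : (2 * Real.pi * δ : ℝ) = 2 * Real.pi * (n : ℝ) := by exact_mod_cast h2
    have h4 : δ = (n : ℝ) := by
      have h2π : (2 * Real.pi) ≠ 0 := by positivity
      exact mul_left_cancel₀ h2π h3
    rcases eq_or_ne n 0 with h | h
    · rw [h] at h4; simp [h4] at hδ
    · have h5 : (1 : ℝ) ≤ |δ| := by
        rw [h4]
        exact_mod_cast Int.one_le_abs h
      have h6 : |δ| ≤ 1 / 2 := by
        refine hδ'.trans ?_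
        apply div_le_div_of_nonneg_left (by norm_num) (by norm_num)
        nlinarith
      linarith
  have hterm : ∀ x ∈ Finset.range N,
      Complex.exp (2 * Real.pi * Complex.I * x * δ) = z ^ x := by
    intro x _
    rw [hz, ← Complex.exp_nat_mul]
    congr 1
    push_cast
    ring
  rw [Finset.sum_congr rfl hterm, geom_sum_eq hz1, norm_div, div_pow]
  have hzN : z ^ N = Complex.exp ((2 * Real.pi * (N * δ) : ℝ) * I) := by
    rw [hz, ← Complex.exp_nat_mul]
    congr 1
    push_cast
    ring
  rw [hzN]
  have hnum : ‖Complex.exp ((2 * Real.pi * (N * δ) : ℝ) * I) - 1‖ ^ 2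
      = 4 * Real.sin (Real.pi * (N * δ)) ^ 2 := by
    rw [abs_exp_I_sub_one_sq]; ring_nf
  have hden : ‖z - 1‖ ^ 2 = 4 * Real.sin (Real.pi * δ) ^ 2 := by
    rw [hz, abs_exp_I_sub_one_sq]; ring_nf
  rw [hnum, hden]
  have hsin_even1 : Real.sin (Real.pi * δ) ^ 2 = Real.sin (Real.pi * |δ|) ^ 2 := by
    rcases abs_cases δ with ⟨h, _⟩ | ⟨h, _⟩ <;> rw [h] <;> simp [Real.sin_neg, mul_neg]
  have hsin_even2 : Real.sin (Real.pi * (N * δ)) ^ 2 = Real.sin (Real.pi * (N * |δ|)) ^ 2 := by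
    rcases abs_cases δ with ⟨h, _⟩ | ⟨h, _⟩ <;> rw [h] <;> simp [Real.sin_neg, mul_neg]
  rw [hsin_even1, hsin_even2]
  set t := |δ| with ht
  have htpos : 0 < t := hδ
  have htN : (N : ℝ) * t ≤ 1 / 2 := by
    rw [le_div_iff₀ (by nlinarith)] at hδ'
    nlinarith
  have hub : Real.sin (Real.pi * t) ≤ Real.pi * t := Real.sin_le (by positivity)
  have hlb : 2 * ((N : ℝ) * t) ≤ Real.sin (Real.pi * (N * t)) := by
    have h := Real.mul_le_sin (x := Real.pi * (N * t)) (by positivity) (by nlinarith)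
    calc 2 * ((N : ℝ) * t) = 2 / Real.pi * (Real.pi * (N * t)) := by
          field_simp
      _ ≤ _ := h
  have hsinpos : 0 < Real.sin (Real.pi * t) := by
    apply Real.sin_pos_of_pos_of_lt_pi (by positivity)
    nlinarith
  have h0 : (0 : ℝ) ≤ 2 * ((N : ℝ) * t) := by positivity
  have hnumlb : 4 * ((N : ℝ) * t) ^ 2 ≤ Real.sin (Real.pi * (N * t)) ^ 2 := by
    have := mul_le_mul hlb hlb h0 (h0.trans hlb)
    nlinarith [this]
  have hdenub : Real.sin (Real.pi * t) ^ 2 ≤ (Real.pi * t) ^ 2 := by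
    nlinarith [hub, hsinpos]
  have hS1 : 0 < 4 * Real.sin (Real.pi * t) ^ 2 := by
    have := pow_pos hsinpos 2; linarith
  rw [← mul_div_assoc, le_div_iff₀ hS1]
  rw [div_mul_eq_mul_div, one_div, inv_mul_eq_div, div_le_div_iff₀ (by positivity) (by positivity)]
  have A := mul_le_mul_of_nonneg_left hdenub (show (0:ℝ) ≤ 16 * (N : ℝ) ^ 2 by positivity)
  have B := mul_le_mul_of_nonneg_left hnumlb (show (0:ℝ) ≤ 4 * Real.pi ^ 2 by positivity)
  have C : 16 * (N : ℝ) ^ 2 * (Real.pi * t) ^ 2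
      = 4 * Real.pi ^ 2 * (4 * ((N : ℝ) * t) ^ 2) := by ring
  have D : 4 * (4 * Real.sin (Real.pi * t) ^ 2) * (N : ℝ) ^ 2
      = 16 * (N : ℝ) ^ 2 * Real.sin (Real.pi * t) ^ 2 := by ring
  have E : 4 * Real.sin (Real.pi * (↑N * t)) ^ 2 * Real.pi ^ 2
      = 4 * Real.pi ^ 2 * Real.sin (Real.pi * (↑N * t)) ^ 2 := by ring
  linarith [A, B]
end

section
/- Let x ∈ ℂ^m be a nonzero vector with κ(x) = max_k |x_k| / min_{k, x_k≠0} |x_k|, and let q = ⌈log₂ κ(x)⌉ (or the minimal q with κ(x) ≤ 2^q). Partition the nonzero entries by dyadic magnitude: let y_j be the vector containing the entries of x whose absolute values lie in [2^{j−1}·μ, 2^j·μ) where μ = min_{k,x_k≠0}|x_k| (and the top interval closed). Then x = y_1 + ⋯ + y_q, each nonzero y_j satisfies κ(y_j) ≤ 2, and ∑_j ‖y_j‖₂ ≤ √q·‖x‖₂. -/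
open Finset

lemma key_unique (μ a : ℝ) (hμ : 0 < μ) (q : ℕ) (hq : 1 ≤ q) (h1 : μ ≤ a) :
    ∃! j : Fin q, 2 ^ (j : ℕ) * μ ≤ a ∧ (a < 2 ^ ((j : ℕ) + 1) * μ ∨ (j : ℕ) + 1 = q) := by
  classical
  have hmono : ∀ i i' : ℕ, i' < q → i < i' →
      (2 ^ i * μ ≤ a ∧ (a < 2 ^ (i + 1) * μ ∨ i + 1 = q)) → 2 ^ i' * μ ≤ a → False := by
    intro i i' hi' hlt ⟨_, hh⟩ h1'
    rcases hh with h | h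
    · have hle : (2:ℝ) ^ (i + 1) * μ ≤ 2 ^ i' * μ := by
        apply mul_le_mul_of_nonneg_right _ hμ.le
        exact pow_le_pow_right₀ one_le_two (by omega)
      linarith
    · omega
  set P : ℕ → Prop := fun j => 2 ^ j * μ ≤ a with hP
  have hP0 : P 0 := by simpa [hP] using h1
  set j0 := Nat.findGreatest P (q - 1) with hj0
  have hj0q : j0 ≤ q - 1 := Nat.findGreatest_le _
  have hj0lt : j0 < q := by omega
  have hj0P : P j0 := Nat.findGreatest_spec (Nat.zero_le _) hP0
  have hmain : 2 ^ (j0 : ℕ) * μ ≤ a ∧ (a < 2 ^ (j0 + 1) * μ ∨ j0 + 1 = q) := by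
    refine ⟨hj0P, ?_⟩
    by_cases hcase : j0 + 1 = q
    · exact Or.inr hcase
    · left
      have hnP : ¬ P (j0 + 1) :=
        Nat.findGreatest_is_greatest (n := q - 1) (k := j0 + 1) (by omega) (by omega)
      exact lt_of_not_ge hnP
  refine ⟨⟨j0, hj0lt⟩, hmain, ?_⟩
  rintro ⟨j, hjq⟩ hj
  simp only [Fin.mk.injEq]
  rcases lt_trichotomy j j0 with h | h | h
  · exact absurd (hmono j j0 hj0lt h hj hj0P) (by simp)
  · exact h
  · exact absurd (hmono j0 j hjq h hmain hj.1) (by simp)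

/-- Dyadic decomposition for quantum state preparation: `μ` is the smallest absolute
value of a nonzero entry of `x`, `κ` the ratio of the largest to the smallest such
absolute value, `q` the minimal positive integer with `κ ≤ 2^q`, and `y j`
(for `j = 0, …, q-1`, representing the paper's `y_{j+1}`) keeps exactly the entries
of `x` with absolute value in `[2^j μ, 2^{j+1} μ)` (topmost interval closed).
Then `x = ∑ y j`, each `y j` has ratio of largest to smallest nonzero absolute value
at most `2`, and `∑ ‖y j‖ ≤ √q ‖x‖`. -/
theorem stmt_11 (m : ℕ) (x : EuclideanSpace ℂ (Fin m)) (hx : x ≠ 0)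
    (μ Kmax κ : ℝ)
    (hμlb : ∀ k, x k ≠ 0 → μ ≤ ‖x k‖)
    (hμmem : ∃ k, x k ≠ 0 ∧ ‖x k‖ = μ)
    (hKub : ∀ k, ‖x k‖ ≤ Kmax)
    (hKmem : ∃ k, x k ≠ 0 ∧ ‖x k‖ = Kmax)
    (hκ : κ = Kmax / μ)
    (q : ℕ) (hq1 : 1 ≤ q) (hq : κ ≤ 2 ^ q)
    (hqmin : ∀ p : ℕ, 1 ≤ p → κ ≤ 2 ^ p → q ≤ p)
    (y : Fin q → EuclideanSpace ℂ (Fin m))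
    (hy : ∀ j k, y j k =
      if 2 ^ (j : ℕ) * μ ≤ ‖x k‖ ∧
          (‖x k‖ < 2 ^ ((j : ℕ) + 1) * μ ∨ (j : ℕ) + 1 = q)
        then x k else 0) :
    x = ∑ j, y j ∧
    (∀ j k k', y j k ≠ 0 → y j k' ≠ 0 →
      ‖y j k‖ ≤ 2 * ‖y j k'‖) ∧
    (∑ j, ‖y j‖) ≤ Real.sqrt q * ‖x‖ := by
  classical
  have hμpos : 0 < μ := by
    obtain ⟨k, hk, hkμ⟩ := hμmem
    rw [← hkμ]
    exact norm_pos_iff.mpr hk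
  have hKle : Kmax ≤ 2 ^ q * μ := by
    rw [hκ, div_le_iff₀ hμpos] at hq
    linarith [hq]
  -- for entries with x k = 0, all y j k = 0
  have hzero : ∀ (j : Fin q) k, x k = 0 → y j k = 0 := by
    intro j k hk
    rw [hy j k, if_neg]
    rintro ⟨h1, -⟩
    rw [hk] at h1
    simp at h1
    nlinarith [pow_pos (by norm_num : (0:ℝ) < 2) (j : ℕ)]
  -- for nonzero entries there is a unique j
  have key : ∀ k, x k ≠ 0 → ∃! j : Fin q,
      2 ^ (j : ℕ) * μ ≤ ‖x k‖ ∧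
      (‖x k‖ < 2 ^ ((j : ℕ) + 1) * μ ∨ (j : ℕ) + 1 = q) :=
    fun k hk => key_unique μ _ hμpos q hq1 (hμlb k hk)
  -- pointwise sum
  have hsum : ∀ k, (∑ j, y j) k = x k := by
    intro k
    have happ : (∑ j, y j) k = ∑ j, y j k := by
      rw [WithLp.ofLp_sum]
      exact Finset.sum_apply k univ _
    rw [happ]
    by_cases hk : x k = 0
    · rw [hk, Finset.sum_eq_zero]
      intro j _
      exact hzero j k hk
    · obtain ⟨j0, hj0, hj0u⟩ := key k hk
      rw [Finset.sum_eq_single j0]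
      · rw [hy j0 k, if_pos hj0]
      · intro b _ hb
        rw [hy b k]
        rw [if_neg]
        intro hcond
        exact hb (hj0u b hcond)
      · intro h
        exact absurd (mem_univ j0) h
  have hxsum : x = ∑ j, y j := by
    ext k
    exact (hsum k).symm
  refine ⟨hxsum, ?_, ?_⟩
  · -- ratio bound
    intro j k k' hk hk'
    rw [hy j k] at hk ⊢
    rw [hy j k'] at hk' ⊢
    by_cases hck : (2 ^ (j : ℕ) * μ ≤ ‖x k‖ ∧
        (‖x k‖ < 2 ^ ((j : ℕ) + 1) * μ ∨ (j : ℕ) + 1 = q))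
    · by_cases hck' : (2 ^ (j : ℕ) * μ ≤ ‖x k'‖ ∧
          (‖x k'‖ < 2 ^ ((j : ℕ) + 1) * μ ∨ (j : ℕ) + 1 = q))
      · rw [if_pos hck, if_pos hck']
        have h1 : 2 ^ (j : ℕ) * μ ≤ ‖x k'‖ := hck'.1
        have h2 : ‖x k‖ ≤ 2 ^ ((j : ℕ) + 1) * μ := by
          rcases hck.2 with h | h
          · exact h.le
          · calc ‖x k‖ ≤ Kmax := hKub k
              _ ≤ 2 ^ q * μ := hKle
              _ = 2 ^ ((j : ℕ) + 1) * μ := by rw [h]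
        calc ‖x k‖ ≤ 2 ^ ((j : ℕ) + 1) * μ := h2
          _ = 2 * (2 ^ (j : ℕ) * μ) := by ring
          _ ≤ 2 * ‖x k'‖ := by linarith
      · rw [if_neg hck'] at hk'
        exact absurd rfl hk'
    · rw [if_neg hck] at hk
      exact absurd rfl hk
  · -- norm bound
    have hnormsq : ∀ z : EuclideanSpace ℂ (Fin m),
        ‖z‖ ^ 2 = ∑ k, ‖z k‖ ^ 2 := by
      intro z
      rw [EuclideanSpace.norm_eq, Real.sq_sqrt]
      · exact Finset.sum_nonneg fun k _ => sq_nonneg _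
    have hsumsq : ∑ j, ‖y j‖ ^ 2 = ‖x‖ ^ 2 := by
      rw [hnormsq x]
      simp_rw [hnormsq]
      rw [Finset.sum_comm]
      refine Finset.sum_congr rfl fun k _ => ?_
      by_cases hk : x k = 0
      · rw [hk]
        simp only [norm_zero]
        rw [Finset.sum_eq_zero]
        · norm_num
        · intro j _
          rw [hzero j k hk]
          simp
      · obtain ⟨j0, hj0, hj0u⟩ := key k hk
        rw [Finset.sum_eq_single j0]
        · rw [hy j0 k, if_pos hj0]
        · intro b _ hb
          rw [hy b k, if_neg (fun hcond => hb (hj0u b hcond))]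
          simp
        · intro h
          exact absurd (mem_univ j0) h
    have hnn : (0:ℝ) ≤ ∑ j, ‖y j‖ := Finset.sum_nonneg fun j _ => norm_nonneg _
    have hCS : (∑ j, ‖y j‖) ^ 2 ≤ (q : ℝ) * ‖x‖ ^ 2 := by
      have h := sq_sum_le_card_mul_sum_sq (s := (univ : Finset (Fin q)))
        (f := fun j => ‖y j‖)
      simpa [hsumsq] using h
    have h2 : (∑ j, ‖y j‖) ≤ Real.sqrt ((q : ℝ) * ‖x‖ ^ 2) :=
      (Real.le_sqrt hnn (by positivity)).mpr hCS
    calc (∑ j, ‖y j‖) ≤ Real.sqrt ((q : ℝ) * ‖x‖ ^ 2) := h2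
      _ = Real.sqrt q * ‖x‖ := by
          rw [Real.sqrt_mul (Nat.cast_nonneg q), Real.sqrt_sq (norm_nonneg x)]
end
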